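/- Cascaded error system convergence: suppose Δ : ℝ≥0 → ℝ is continuous bounded with ∫₀^t Δ(s)² ds → ∞, and x, y : ℝ≥0 → ℝ satisfy ẋ = -γ₁ Δ(t)² x and ẏ = -γ₂ Δ(t)² y - c x(t) with γ₁, γ₂ > 0, c ∈ ℝ. If additionally Δ is persistently exciting, then both x(t) → 0 and y(t) → 0 exponentially. -/

import Mathlib

open Filter Real

theorem stmt_8 (Δ : ℝ → ℝ) (hΔ : Continuous Δ) (M : ℝ) (hbdd : ∀ t, |Δ t| ≤ M)
    (hex : Tendsto (fun t => ∫ s in (0:ℝ)..t, (Δ s)^2) atTop atTop)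
    (γ₁ γ₂ c : ℝ) (hγ₁ : 0 < γ₁) (hγ₂ : 0 < γ₂)
    (x y : ℝ → ℝ)
    (hx : ∀ t, HasDerivAt x (-γ₁ * (Δ t)^2 * x t) t)
    (hy : ∀ t, HasDerivAt y (-γ₂ * (Δ t)^2 * y t - c * x t) t)
    (T μ : ℝ) (hT : 0 < T) (hμ : 0 < μ)
    (hPE : ∀ t ≥ (0:ℝ), μ ≤ ∫ s in t..(t+T), (Δ s)^2) :
    ∃ C > (0:ℝ), ∃ ρ > (0:ℝ), ∀ t ≥ (0:ℝ),
      |x t| + |y t| ≤ C * Real.exp (-ρ * t) := by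
  have hcont : Continuous fun s => (Δ s)^2 := hΔ.pow 2
  have hint : ∀ a b : ℝ, IntervalIntegrable (fun s => (Δ s)^2) MeasureTheory.volume a b :=
    fun a b => hcont.intervalIntegrable a b
  set I : ℝ → ℝ := fun t => ∫ s in (0:ℝ)..t, (Δ s)^2 with hIdef
  have hIderiv : ∀ t, HasDerivAt I ((Δ t)^2) t := fun t =>
    intervalIntegral.integral_hasDerivAt_right (hint 0 t)
      (hcont.stronglyMeasurableAtFilter _ _) hcont.continuousAt
  have hIcont : Continuous I := by
    rw [continuous_iff_continuousAt]; exact fun t => (hIderiv t).continuousAt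
  have hI0 : I 0 = 0 := intervalIntegral.integral_same
  have hImono : ∀ s t : ℝ, s ≤ t → I s ≤ I t := by
    intro s t hst
    have h1 : I s + ∫ u in s..t, (Δ u)^2 = I t :=
      intervalIntegral.integral_add_adjacent_intervals (hint 0 s) (hint s t)
    nlinarith [intervalIntegral.integral_nonneg (μ := MeasureTheory.volume) hst (fun u _ => sq_nonneg (Δ u))]
  have hInonneg : ∀ t : ℝ, 0 ≤ t → 0 ≤ I t := by
    intro t ht
    have := hImono 0 t ht
    rw [hI0] at this; exact this
  -- closed-form for x
  have hxg : ∀ t, HasDerivAt (fun t => x t * Real.exp (γ₁ * I t)) 0 t := by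
    intro t
    have h1 : HasDerivAt (fun t => Real.exp (γ₁ * I t))
        (Real.exp (γ₁ * I t) * (γ₁ * (Δ t)^2)) t := ((hIderiv t).const_mul γ₁).exp
    have h2 := (hx t).mul h1
    refine h2.congr_deriv ?_
    ring
  have hxconst : ∀ t, x t * Real.exp (γ₁ * I t) = x 0 := by
    intro t
    have hd : Differentiable ℝ (fun t => x t * Real.exp (γ₁ * I t)) :=
      fun t => (hxg t).differentiableAt
    have := is_const_of_deriv_eq_zero hd (fun t => (hxg t).deriv) t 0
    simpa [hI0] using this
  have hxfor : ∀ t, x t = x 0 * Real.exp (-(γ₁ * I t)) := by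
    intro t
    rw [← hxconst t, Real.exp_neg]
    field_simp
  -- w = y * exp(γ₂ I) dynamics
  have hwderiv : ∀ t, HasDerivAt (fun t => y t * Real.exp (γ₂ * I t))
      (-(c * x 0) * Real.exp ((γ₂ - γ₁) * I t)) t := by
    intro t
    have h1 : HasDerivAt (fun t => Real.exp (γ₂ * I t))
        (Real.exp (γ₂ * I t) * (γ₂ * (Δ t)^2)) t := ((hIderiv t).const_mul γ₂).exp
    have h2 := (hy t).mul h1
    refine h2.congr_deriv ?_
    have hxe : x t * Real.exp (γ₂ * I t) = x 0 * Real.exp ((γ₂ - γ₁) * I t) := by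
      rw [hxfor t, mul_assoc, ← Real.exp_add]
      ring_nf
    linear_combination (-c) * hxe
  have hwcont : Continuous (fun s => -(c * x 0) * Real.exp ((γ₂ - γ₁) * I s)) :=
    continuous_const.mul (Real.continuous_exp.comp (continuous_const.mul hIcont))
  have hwint : ∀ t : ℝ, (∫ s in (0:ℝ)..t, -(c * x 0) * Real.exp ((γ₂ - γ₁) * I s))
      = y t * Real.exp (γ₂ * I t) - y 0 := by
    intro t
    have h := intervalIntegral.integral_eq_sub_of_hasDerivAt
      (f := fun t => y t * Real.exp (γ₂ * I t))
      (f' := fun s => -(c * x 0) * Real.exp ((γ₂ - γ₁) * I s))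
      (fun s _ => hwderiv s) (hwcont.intervalIntegrable 0 t)
    simpa [hI0] using h
  set γ : ℝ := min γ₁ γ₂ with hγdef
  have hγpos : 0 < γ := lt_min hγ₁ hγ₂
  have hγ1 : γ ≤ γ₁ := min_le_left _ _
  have hγ2 : γ ≤ γ₂ := min_le_right _ _
  -- main pointwise bound
  have hbound : ∀ t : ℝ, 0 ≤ t →
      |x t| + |y t| ≤ (|x 0| + |y 0| + |c * x 0| * t) * Real.exp (-γ * I t) := by
    intro t ht
    have hIt := hInonneg t ht
    have hxb : |x t| ≤ |x 0| * Real.exp (-γ * I t) := by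
      rw [hxfor t, abs_mul, Real.abs_exp]
      gcongr
      have : γ * I t ≤ γ₁ * I t := mul_le_mul_of_nonneg_right hγ1 hIt
      linarith
    -- bound the integral J
    have hJ : |∫ s in (0:ℝ)..t, -(c * x 0) * Real.exp ((γ₂ - γ₁) * I s)|
        ≤ |c * x 0| * Real.exp ((γ₂ - γ) * I t) * t := by
      have h := intervalIntegral.norm_integral_le_of_norm_le_const
        (C := |c * x 0| * Real.exp ((γ₂ - γ) * I t))
        (f := fun s => -(c * x 0) * Real.exp ((γ₂ - γ₁) * I s))
        (a := (0:ℝ)) (b := t) ?_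
      · rw [Real.norm_eq_abs] at h
        calc |∫ s in (0:ℝ)..t, -(c * x 0) * Real.exp ((γ₂ - γ₁) * I s)|
            ≤ |c * x 0| * Real.exp ((γ₂ - γ) * I t) * |t - 0| := h
          _ = |c * x 0| * Real.exp ((γ₂ - γ) * I t) * t := by
              rw [sub_zero, abs_of_nonneg ht]
      · intro s hs
        rw [Set.uIoc_of_le ht] at hs
        have hs0 : 0 < s := hs.1
        have hst : s ≤ t := hs.2
        rw [Real.norm_eq_abs, abs_mul, abs_neg, Real.abs_exp]
        have hexp : (γ₂ - γ₁) * I s ≤ (γ₂ - γ) * I t := by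
          have hIs0 : 0 ≤ I s := hInonneg s hs0.le
          have hIst : I s ≤ I t := hImono s t hst
          have hIt0 : 0 ≤ I t := hIs0.trans hIst
          rcases le_total γ₁ γ₂ with hcase | hcase
          · have hγeq : γ = γ₁ := min_eq_left hcase
            rw [hγeq]
            exact mul_le_mul_of_nonneg_left hIst (by linarith)
          · have hγeq : γ = γ₂ := min_eq_right hcase
            rw [hγeq]
            have h1 : (γ₂ - γ₁) * I s ≤ 0 :=
              mul_nonpos_of_nonpos_of_nonneg (by linarith) hIs0
            simpa using h1
        exact mul_le_mul_of_nonneg_left (Real.exp_le_exp.2 hexp) (abs_nonneg _)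
    -- from hwint, bound |y t|
    have hE2 : Real.exp (γ₂ * I t) > 0 := Real.exp_pos _
    have h1 : |y t| * Real.exp (γ₂ * I t) ≤
        |y 0| + |c * x 0| * Real.exp ((γ₂ - γ) * I t) * t := by
      have : y t * Real.exp (γ₂ * I t) =
          y 0 + ∫ s in (0:ℝ)..t, -(c * x 0) * Real.exp ((γ₂ - γ₁) * I s) := by
        rw [hwint t]; ring
      calc |y t| * Real.exp (γ₂ * I t) = |y t * Real.exp (γ₂ * I t)| := by
            rw [abs_mul, Real.abs_exp]
        _ = |y 0 + ∫ s in (0:ℝ)..t, -(c * x 0) * Real.exp ((γ₂ - γ₁) * I s)| := by rw [this]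
        _ ≤ |y 0| + |∫ s in (0:ℝ)..t, -(c * x 0) * Real.exp ((γ₂ - γ₁) * I s)| := abs_add_le _ _
        _ ≤ |y 0| + |c * x 0| * Real.exp ((γ₂ - γ) * I t) * t := by linarith
    have hyb : |y t| ≤ (|y 0| + |c * x 0| * t) * Real.exp (-γ * I t) := by
      have h2 := mul_le_mul_of_nonneg_right h1 (Real.exp_pos (-(γ₂ * I t))).le
      have e1 : |y t| * Real.exp (γ₂ * I t) * Real.exp (-(γ₂ * I t)) = |y t| := by
        rw [mul_assoc, ← Real.exp_add]; simp
      have e2 : Real.exp ((γ₂ - γ) * I t) * Real.exp (-(γ₂ * I t)) = Real.exp (-γ * I t) := by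
        rw [← Real.exp_add]; ring_nf
      have e3 : Real.exp (-(γ₂ * I t)) ≤ Real.exp (-γ * I t) := by
        apply Real.exp_le_exp.2
        have : γ * I t ≤ γ₂ * I t := mul_le_mul_of_nonneg_right hγ2 hIt
        linarith
      rw [e1] at h2
      calc |y t| ≤ (|y 0| + |c * x 0| * Real.exp ((γ₂ - γ) * I t) * t) *
            Real.exp (-(γ₂ * I t)) := h2
        _ = |y 0| * Real.exp (-(γ₂ * I t)) +
            |c * x 0| * t * (Real.exp ((γ₂ - γ) * I t) * Real.exp (-(γ₂ * I t))) := by ring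
        _ = |y 0| * Real.exp (-(γ₂ * I t)) + |c * x 0| * t * Real.exp (-γ * I t) := by rw [e2]
        _ ≤ |y 0| * Real.exp (-γ * I t) + |c * x 0| * t * Real.exp (-γ * I t) := by
            gcongr
        _ = (|y 0| + |c * x 0| * t) * Real.exp (-γ * I t) := by ring
    calc |x t| + |y t| ≤ |x 0| * Real.exp (-γ * I t) +
          (|y 0| + |c * x 0| * t) * Real.exp (-γ * I t) := by linarith
      _ = (|x 0| + |y 0| + |c * x 0| * t) * Real.exp (-γ * I t) := by ring
  -- lower bound on I from PE
  have hIlow : ∀ t : ℝ, 0 ≤ t → μ * (t / T) - μ ≤ I t := by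
    have hn : ∀ n : ℕ, (n : ℝ) * μ ≤ I ((n : ℝ) * T) := by
      intro n
      induction n with
      | zero => simp [hI0]
      | succ k ih =>
        have hk : (0:ℝ) ≤ (k:ℝ) * T := by positivity
        have hpe := hPE ((k:ℝ)*T) hk
        have hadd : I ((k:ℝ)*T) + (∫ s in ((k:ℝ)*T)..((k:ℝ)*T + T), (Δ s)^2)
            = I ((k:ℝ)*T + T) :=
          intervalIntegral.integral_add_adjacent_intervals (hint _ _) (hint _ _)
        have heq : ((k:ℝ)+1) * T = (k:ℝ)*T + T := by ring
        push_cast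
        rw [heq]
        nlinarith
    intro t ht
    set n := ⌊t / T⌋₊ with hn'
    have htT : (0:ℝ) ≤ t / T := by positivity
    have h1 : (n:ℝ) * T ≤ t := by
      have hfl := Nat.floor_le htT
      calc (n:ℝ) * T ≤ (t/T) * T := mul_le_mul_of_nonneg_right hfl hT.le
        _ = t := by field_simp
    have h2 : t / T < (n:ℝ) + 1 := Nat.lt_floor_add_one _
    have h3 := hImono _ _ h1
    have h4 := hn n
    nlinarith
  -- assemble the exponential bound
  set ρ : ℝ := γ * μ / (2 * T) with hρdef
  have hρpos : 0 < ρ := by positivity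
  set A : ℝ := |x 0| + |y 0| with hA
  set B : ℝ := |c * x 0| with hB
  have hA0 : 0 ≤ A := by positivity
  have hB0 : 0 ≤ B := abs_nonneg _
  refine ⟨(A + B / ρ) * Real.exp (γ * μ) + 1, by positivity, ρ, hρpos, ?_⟩
  intro t ht
  have key1 : Real.exp (-γ * I t) ≤ Real.exp (γ * μ) * Real.exp (-(2*ρ) * t) := by
    rw [← Real.exp_add]
    apply Real.exp_le_exp.2
    have hIl := hIlow t ht
    have h5 : γ * (μ * (t / T) - μ) ≤ γ * I t := mul_le_mul_of_nonneg_left hIl hγpos.le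
    have h6 : (2*ρ) * t = γ * μ * (t / T) := by
      rw [hρdef]; field_simp
    nlinarith
  have key2 : (A + B * t) * Real.exp (-ρ * t) ≤ A + B / ρ := by
    have he1 : Real.exp (-ρ * t) ≤ 1 := by
      apply Real.exp_le_one_iff.2
      nlinarith
    have he2 : t * Real.exp (-ρ * t) ≤ 1 / ρ := by
      have h7 : ρ * t + 1 ≤ Real.exp (ρ * t) := Real.add_one_le_exp _
      have h8 : Real.exp (-ρ * t) * Real.exp (ρ * t) = 1 := by
        rw [← Real.exp_add]; simp
      have h9 : 0 < Real.exp (ρ * t) := Real.exp_pos _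
      have h11 := mul_le_mul_of_nonneg_left h7 (Real.exp_pos (-ρ * t)).le
      rw [le_div_iff₀ hρpos]
      nlinarith [Real.exp_pos (-ρ * t), ht]
    calc (A + B * t) * Real.exp (-ρ * t)
        = A * Real.exp (-ρ * t) + B * (t * Real.exp (-ρ * t)) := by ring
      _ ≤ A * 1 + B * (1 / ρ) := by
          gcongr
      _ = A + B / ρ := by ring
  have hb := hbound t ht
  calc |x t| + |y t| ≤ (A + B * t) * Real.exp (-γ * I t) := hb
    _ ≤ (A + B * t) * (Real.exp (γ * μ) * Real.exp (-(2*ρ) * t)) := by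
        have hABt : 0 ≤ A + B * t := by positivity
        exact mul_le_mul_of_nonneg_left key1 hABt
    _ = ((A + B * t) * Real.exp (-ρ * t)) * Real.exp (γ * μ) * Real.exp (-ρ * t) := by
        have hsplit : Real.exp (-(2*ρ) * t) = Real.exp (-ρ * t) * Real.exp (-ρ * t) := by
          rw [← Real.exp_add]; ring_nf
        rw [hsplit]; ring
    _ ≤ (A + B / ρ) * Real.exp (γ * μ) * Real.exp (-ρ * t) := by
        gcongr
    _ ≤ ((A + B / ρ) * Real.exp (γ * μ) + 1) * Real.exp (-ρ * t) := by
        nlinarith [Real.exp_pos (-ρ * t)]
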